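/- Let τ = (1+√5)/2, R = diag(e^{−4πi/5}, e^{3πi/5}), F = [[1/τ, 1/√τ],[1/√τ, −1/τ]]. Define N₀ = F and inductively N_j = N_{j−1}·R·N_{j−1}†·R³·N_{j−1}·R³·N_{j−1}†·R·N_{j−1}. Then for all j ≥ 0, |⟨1| N_j |0⟩| = (1/√τ)^{5^j}. -/

import Mathlib

open Matrix Complex

noncomputable def fibR : Matrix (Fin 2) (Fin 2) ℂ :=
  !![Complex.exp (-4 * Real.pi * Complex.I / 5), 0; 0, Complex.exp (3 * Real.pi * Complex.I / 5)]

noncomputable def fibF : Matrix (Fin 2) (Fin 2) ℂ :=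
  !![(1 / ((1 + Real.sqrt 5) / 2) : ℝ), (1 / Real.sqrt ((1 + Real.sqrt 5) / 2) : ℝ);
     (1 / Real.sqrt ((1 + Real.sqrt 5) / 2) : ℝ), -(1 / ((1 + Real.sqrt 5) / 2) : ℝ)]

noncomputable def Rz (z : ℂ) : Matrix (Fin 2) (Fin 2) ℂ := !![z^6, 0; 0, z^3]

lemma unit_mul {A B : Matrix (Fin 2) (Fin 2) ℂ} (hA : Aᴴ * A = 1) (hB : Bᴴ * B = 1) :
    (A * B)ᴴ * (A * B) = 1 := by
  rw [conjTranspose_mul]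
  have h : Bᴴ * Aᴴ * (A * B) = Bᴴ * (Aᴴ * A) * B := by
    simp [Matrix.mul_assoc]
  rw [h, hA, Matrix.mul_one, hB]

lemma unit_conjT {A : Matrix (Fin 2) (Fin 2) ℂ} (hA : Aᴴ * A = 1) :
    (Aᴴ)ᴴ * Aᴴ = 1 := by
  rw [conjTranspose_conjTranspose]
  exact mul_eq_one_comm.mp hA

set_option maxRecDepth 100000 in
set_option maxHeartbeats 1000000 in
lemma key (z e a b c d : ℂ) (hz : z^5 = -1) (hPhi : z^4 - z^3 + z^2 - z + 1 = 0) :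
    (!![a,b;c,d] * Rz z * !![d*e, -(b*e); -(c*e), a*e] * (Rz z)^3 * !![a,b;c,d]
      * (Rz z)^3 * !![d*e, -(b*e); -(c*e), a*e] * Rz z * !![a,b;c,d]) 1 0
      = z^6 * c^3 * (b*e)^2 := by
  have h3 : (Rz z)^3 = Rz z * Rz z * Rz z := by
    rw [pow_succ, pow_succ, pow_one]
  rw [h3]
  simp only [Rz, Matrix.mul_fin_two, Matrix.cons_val', Matrix.cons_val_zero,
    Matrix.cons_val_one, Matrix.head_cons, Matrix.empty_val', Matrix.cons_val_fin_one,
    Matrix.head_fin_const, Matrix.of_apply]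
  linear_combination (a^2*c*d^2*e^2*z^43 - a*b*c^2*d*e^2*z^40 - a^2*c*d^2*e^2*z^40 - a^2*c*d^2*e^2*z^38 + a*b*c^2*d*e^2*z^37 + a*b*c^2*d*e^2*z^35 + a^2*c*d^2*e^2*z^35 - 2*a*b*c^2*d*e^2*z^34 + a^2*c*d^2*e^2*z^33 - a*b*c^2*d*e^2*z^32 + b^2*c^3*e^2*z^31 + 2*a*b*c^2*d*e^2*z^31 + a^2*c*d^2*e^2*z^31 - a*b*c^2*d*e^2*z^30 - a^2*c*d^2*e^2*z^30 + 2*a*b*c^2*d*e^2*z^29 - 2*a*b*c^2*d*e^2*z^28 - a^2*c*d^2*e^2*z^28 + a*b*c^2*d*e^2*z^27 - b^2*c^3*e^2*z^26 - 2*a*b*c^2*d*e^2*z^26 - a^2*c*d^2*e^2*z^26 + 2*a*b*c^2*d*e^2*z^25 + a^2*c*d^2*e^2*z^25 - 2*a*b*c^2*d*e^2*z^24 + 2*a*b*c^2*d*e^2*z^23 + a^2*c*d^2*e^2*z^23 - 2*a*b*c^2*d*e^2*z^22 - a^2*c*d^2*e^2*z^22 + b^2*c^3*e^2*z^21 + 2*a*b*c^2*d*e^2*z^21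 + a^2*c*d^2*e^2*z^21 - 2*a*b*c^2*d*e^2*z^20 - a^2*c*d^2*e^2*z^20 + 2*a*b*c^2*d*e^2*z^19 + a^2*c*d^2*e^2*z^19 - 2*a*b*c^2*d*e^2*z^18 - a^2*c*d^2*e^2*z^18 + 2*a*b*c^2*d*e^2*z^17 + a^2*c*d^2*e^2*z^17 - b^2*c^3*e^2*z^16 - 2*a*b*c^2*d*e^2*z^16 - a^2*c*d^2*e^2*z^16 + 2*a*b*c^2*d*e^2*z^15 + a^2*c*d^2*e^2*z^15 - 2*a*b*c^2*d*e^2*z^14 - a^2*c*d^2*e^2*z^14 + 2*a*b*c^2*d*e^2*z^13 + a^2*c*d^2*e^2*z^13 - 2*a*b*c^2*d*e^2*z^12 - a^2*c*d^2*e^2*z^12 + b^2*c^3*e^2*z^11 + 2*a*b*c^2*d*e^2*z^11 + a^2*c*d^2*e^2*z^11 - 2*a*b*c^2*d*e^2*z^10 - a^2*c*d^2*e^2*z^10 + 2*a*b*c^2*d*e^2*z^9 + a^2*c*d^2*e^2*z^9 - 2*a*b*c^2*d*e^2*z^8 - a^2*c*d^2*e^2*z^8 + 2*a*b*c^2*d*e^2*z^7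 + a^2*c*d^2*e^2*z^7 - b^2*c^3*e^2*z^6 - 2*a*b*c^2*d*e^2*z^6 - a^2*c*d^2*e^2*z^6 + 2*a*b*c^2*d*e^2*z^5 + a^2*c*d^2*e^2*z^5 - 2*a*b*c^2*d*e^2*z^4 - a^2*c*d^2*e^2*z^4 + 2*a*b*c^2*d*e^2*z^3 + a^2*c*d^2*e^2*z^3 - 2*a*b*c^2*d*e^2*z^2 - a^2*c*d^2*e^2*z^2 + 2*a*b*c^2*d*e^2*z + a^2*c*d^2*e^2*z - 2*a*b*c^2*d*e^2 - a^2*c*d^2*e^2) * hz + (2*a*b*c^2*d*e^2 + a^2*c*d^2*e^2) * hPhi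

lemma zpow5 : (Complex.exp (Real.pi * Complex.I / 5))^5 = -1 := by
  rw [← Complex.exp_nat_mul]
  rw [show ((5 : ℕ) : ℂ) * (Real.pi * Complex.I / 5) = Real.pi * Complex.I by push_cast; ring]
  exact Complex.exp_pi_mul_I

lemma zim : (Complex.exp (Real.pi * Complex.I / 5)).im = Real.sin (Real.pi / 5) := by
  rw [show (Real.pi : ℂ) * Complex.I / 5 = ((Real.pi / 5 : ℝ) : ℂ) * Complex.I by push_cast; ring]
  exact Complex.exp_ofReal_mul_I_im _

lemma zPhi : (Complex.exp (Real.pi * Complex.I / 5))^4 - (Complex.exp (Real.pi * Complex.I / 5))^3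
    + (Complex.exp (Real.pi * Complex.I / 5))^2 - Complex.exp (Real.pi * Complex.I / 5) + 1 = 0 := by
  set z := Complex.exp (Real.pi * Complex.I / 5) with hzdef
  have h5 : z^5 = -1 := zpow5
  have hne : z + 1 ≠ 0 := by
    intro h
    have him : (z + 1).im = Real.sin (Real.pi / 5) := by
      rw [hzdef]
      simp [Complex.add_im, zim]
    have hpos : 0 < Real.sin (Real.pi / 5) := by
      apply Real.sin_pos_of_pos_of_lt_pi
      · positivity
      · nlinarith [Real.pi_pos]
    rw [h] at him
    simp at him
    exact absurd him.symm (ne_of_gt hpos)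
  have hfac : (z + 1) * (z^4 - z^3 + z^2 - z + 1) = 0 := by
    linear_combination h5
  rcases mul_eq_zero.mp hfac with h | h
  · exact absurd h hne
  · exact h

lemma fibR_eq : fibR = Rz (Complex.exp (Real.pi * Complex.I / 5)) := by
  have h6 : (Complex.exp (Real.pi * Complex.I / 5))^6 = Complex.exp (-4 * Real.pi * Complex.I / 5) := by
    rw [← Complex.exp_nat_mul]
    rw [show ((6 : ℕ) : ℂ) * (Real.pi * Complex.I / 5)
        = -4 * Real.pi * Complex.I / 5 + 2 * Real.pi * Complex.I by push_cast; ring]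
    rw [Complex.exp_add, Complex.exp_two_pi_mul_I, mul_one]
  have h3 : (Complex.exp (Real.pi * Complex.I / 5))^3 = Complex.exp (3 * Real.pi * Complex.I / 5) := by
    rw [← Complex.exp_nat_mul]
    congr 1
    push_cast; ring
  rw [Rz, fibR, h6, h3]

lemma star_z_mul : star (Complex.exp (Real.pi * Complex.I / 5)) * Complex.exp (Real.pi * Complex.I / 5) = 1 := by
  have : star (Complex.exp (Real.pi * Complex.I / 5)) = Complex.exp (-(Real.pi * Complex.I / 5)) := by
    rw [show star (Complex.exp (Real.pi * Complex.I / 5))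
        = (starRingEnd ℂ) (Complex.exp (Real.pi * Complex.I / 5)) from rfl]
    rw [← Complex.exp_conj]
    congr 1
    simp [map_div₀, Complex.conj_I, Complex.conj_ofReal, map_ofNat]
    ring
  rw [this, ← Complex.exp_add]
  simp

lemma Rz_unit : (Rz (Complex.exp (Real.pi * Complex.I / 5)))ᴴ * Rz (Complex.exp (Real.pi * Complex.I / 5)) = 1 := by
  set z := Complex.exp (Real.pi * Complex.I / 5) with hzdef
  have hu : (starRingEnd ℂ) z * z = 1 := star_z_mul
  ext i j
  fin_cases i <;> fin_cases j <;>
    simp [Rz, Matrix.mul_apply, Fin.sum_univ_two, Matrix.conjTranspose_apply,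
      Matrix.one_apply, star_pow] <;>
    rw [← mul_pow, hu, one_pow]

lemma fibF_unit : fibFᴴ * fibF = 1 := by
  have h5 : Real.sqrt 5 ^ 2 = 5 := Real.sq_sqrt (by norm_num)
  have hτpos : (0:ℝ) < (1 + Real.sqrt 5) / 2 := by positivity
  have hss : Real.sqrt ((1 + Real.sqrt 5) / 2) * Real.sqrt ((1 + Real.sqrt 5) / 2)
      = (1 + Real.sqrt 5) / 2 := Real.mul_self_sqrt hτpos.le
  have hsne : Real.sqrt ((1 + Real.sqrt 5) / 2) ≠ 0 := by positivity
  have key00 : (1 / ((1 + Real.sqrt 5) / 2)) * (1 / ((1 + Real.sqrt 5) / 2))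
      + (1 / Real.sqrt ((1 + Real.sqrt 5) / 2)) * (1 / Real.sqrt ((1 + Real.sqrt 5) / 2)) = 1 := by
    have h1 : (1 / Real.sqrt ((1 + Real.sqrt 5) / 2)) * (1 / Real.sqrt ((1 + Real.sqrt 5) / 2))
        = 1 / ((1 + Real.sqrt 5) / 2) := by
      rw [div_mul_div_comm, one_mul, hss]
    rw [h1]
    have h2 : (1 + Real.sqrt 5) ≠ 0 := by positivity
    field_simp
    nlinarith [h5, Real.sqrt_nonneg 5]
  have hsymm : fibFᴴ = fibF := by
    ext i j
    fin_cases i <;> fin_cases j <;>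
      simp [fibF, Matrix.conjTranspose_apply, Complex.conj_ofReal]
  rw [hsymm, fibF, Matrix.mul_fin_two, Matrix.one_fin_two]
  ext i j
  fin_cases i <;> fin_cases j
  · simp only [Fin.zero_eta, Fin.isValue, Matrix.cons_val', Matrix.cons_val_zero,
      Matrix.empty_val', Matrix.cons_val_fin_one, Matrix.cons_val_one, Matrix.head_cons,
      Matrix.head_fin_const, Matrix.of_apply]
    norm_cast
  · simp only [Fin.zero_eta, Fin.mk_one, Fin.isValue, Matrix.cons_val', Matrix.cons_val_zero,
      Matrix.empty_val', Matrix.cons_val_fin_one, Matrix.cons_val_one, Matrix.head_cons,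
      Matrix.head_fin_const, Matrix.of_apply]
    push_cast
    ring
  · simp only [Fin.zero_eta, Fin.mk_one, Fin.isValue, Matrix.cons_val', Matrix.cons_val_zero,
      Matrix.empty_val', Matrix.cons_val_fin_one, Matrix.cons_val_one, Matrix.head_cons,
      Matrix.head_fin_const, Matrix.of_apply]
    push_cast
    ring
  · simp only [Fin.mk_one, Fin.isValue, Matrix.cons_val', Matrix.cons_val_zero,
      Matrix.empty_val', Matrix.cons_val_fin_one, Matrix.cons_val_one, Matrix.head_cons,
      Matrix.head_fin_const, Matrix.of_apply]
    norm_cast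
    linarith [key00]

theorem stmt_11 (N : ℕ → Matrix (Fin 2) (Fin 2) ℂ)
    (h0 : N 0 = fibF)
    (hrec : ∀ j : ℕ, N (j + 1) =
      N j * fibR * (N j)ᴴ * fibR^3 * N j * fibR^3 * (N j)ᴴ * fibR * N j) :
    ∀ j : ℕ, ‖(N j) 1 0‖ = (1 / Real.sqrt ((1 + Real.sqrt 5) / 2))^(5^j) := by
  set z := Complex.exp (Real.pi * Complex.I / 5) with hzdef
  have hz5 : z^5 = -1 := zpow5
  have hPhi : z^4 - z^3 + z^2 - z + 1 = 0 := zPhi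
  have hR : fibR = Rz z := fibR_eq
  have hRu : fibRᴴ * fibR = 1 := by rw [hR]; exact Rz_unit
  have hR3u : (fibR^3)ᴴ * fibR^3 = 1 := by
    have h3 : fibR^3 = fibR * fibR * fibR := by rw [pow_succ, pow_succ, pow_one]
    rw [h3]
    exact unit_mul (unit_mul hRu hRu) hRu
  -- unitarity of all N j
  have hU : ∀ j, (N j)ᴴ * (N j) = 1 := by
    intro j
    induction j with
    | zero => rw [h0]; exact fibF_unit
    | succ j ih =>
      rw [hrec j]
      exact unit_mul (unit_mul (unit_mul (unit_mul (unit_mul (unit_mul (unit_mul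
        (unit_mul ih hRu) (unit_conjT ih)) hR3u) ih) hR3u) (unit_conjT ih)) hRu) ih
  intro j
  induction j with
  | zero =>
    rw [h0]
    have hsτpos : (0:ℝ) < Real.sqrt ((1 + Real.sqrt 5) / 2) := by
      apply Real.sqrt_pos.mpr; positivity
    simp [fibF, Complex.norm_real]
    rw [_root_.abs_of_nonneg (Real.sqrt_nonneg 2), _root_.abs_of_nonneg (Real.sqrt_nonneg (1 + Real.sqrt 5))]
  | succ j ih =>
    -- entries of N j
    obtain ⟨a, b, c, d, hM⟩ : ∃ a b c d, N j = !![a, b; c, d] :=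
      ⟨_, _, _, _, Matrix.eta_fin_two _⟩
    have hU' : N j * (N j)ᴴ = 1 := mul_eq_one_comm.mp (hU j)
    rw [hM] at hU'
    -- scalar unitarity equations
    have h00 : a * star a + b * star b = 1 := by
      have := congrArg (fun X => X 0 0) hU'
      simpa [Matrix.mul_apply, Fin.sum_univ_two, Matrix.conjTranspose_apply,
        Matrix.one_apply] using this
    have h01 : a * star c + b * star d = 0 := by
      have := congrArg (fun X => X 0 1) hU'
      simpa [Matrix.mul_apply, Fin.sum_univ_two, Matrix.conjTranspose_apply,
        Matrix.one_apply] using this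
    have h10 : c * star a + d * star b = 0 := by
      have := congrArg (fun X => X 1 0) hU'
      simpa [Matrix.mul_apply, Fin.sum_univ_two, Matrix.conjTranspose_apply,
        Matrix.one_apply] using this
    have h11 : c * star c + d * star d = 1 := by
      have := congrArg (fun X => X 1 1) hU'
      simpa [Matrix.mul_apply, Fin.sum_univ_two, Matrix.conjTranspose_apply,
        Matrix.one_apply] using this
    set e : ℂ := star a * star d - star b * star c with he
    have hA : star a = d * e := by
      rw [he]; linear_combination (-(star a)) * h11 + (star c) * h10
    have hB : star b = -(c * e) := by
      rw [he]; linear_combination (-(star b)) * h11 + (star d) * h10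
    have hC : star c = -(b * e) := by
      rw [he]; linear_combination (-(star c)) * h00 + (star a) * h01
    have hD : star d = a * e := by
      rw [he]; linear_combination (-(star d)) * h00 + (star b) * h01
    have hMd : (N j)ᴴ = !![d * e, -(b * e); -(c * e), a * e] := by
      rw [Matrix.eta_fin_two ((N j)ᴴ)]
      rw [hM]
      simp only [Matrix.conjTranspose_apply, Matrix.cons_val', Matrix.cons_val_zero,
        Matrix.cons_val_one, Matrix.head_cons, Matrix.empty_val', Matrix.cons_val_fin_one,
        Matrix.head_fin_const, Matrix.of_apply]
      rw [hA, hB, hC, hD]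
    have hentry : (N (j+1)) 1 0 = z^6 * c^3 * (b*e)^2 := by
      rw [hrec j, hR, hMd, hM]
      exact key z e a b c d hz5 hPhi
    have habsz : ‖z‖ = 1 := by
      rw [hzdef, Complex.norm_exp]
      simp
    have habsbe : ‖b * e‖ = ‖c‖ := by
      have : ‖star c‖ = ‖c‖ := by
        simp
      rw [← this, hC]
      simp
    have hc : ‖c‖ = (1 / Real.sqrt ((1 + Real.sqrt 5) / 2))^(5^j) := by
      rw [← ih, hM]
      simp
    rw [hentry]
    simp only [norm_mul, norm_pow, habsz, habsbe, hc, one_pow, one_mul]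
    rw [← pow_add, ← pow_mul, ← pow_succ]
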